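/- For the real recurrence x_{n+1} = x_n + 1/x_n with arbitrary initial value x_0 > 0, the sequence satisfies lim_{n→∞} x_n/√(2n) = 1. -/

import Mathlib

open Filter Finset

/-- For the recurrence `x (n+1) = x n + 1 / x n` with `x 0 > 0`, one has
`x n / √(2 n) → 1`. -/
theorem recurrence_div_sqrt_two_n_tendsto_one
    (x : ℕ → ℝ) (hx0 : 0 < x 0)
    (hx : ∀ n, x (n + 1) = x n + 1 / x n) :
    Filter.Tendsto (fun n : ℕ => x n / Real.sqrt (2 * n)) Filter.atTop (nhds 1) := by
  have hpos : ∀ n, 0 < x n := by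
    intro n
    induction n with
    | zero => exact hx0
    | succ n ih => rw [hx]; positivity
  set y : ℕ → ℝ := fun n => (x n) ^ 2 with hy
  have hypos : ∀ n, 0 < y n := fun n => pow_pos (hpos n) 2
  have hdiff : ∀ n, y (n + 1) - y n = 2 + 1 / y n := by
    intro n
    have h := (hpos n).ne'
    simp only [hy, hx n]
    field_simp
    ring
  have hlow : ∀ n : ℕ, (n : ℝ) ≤ y n := by
    intro n
    induction n with
    | zero => simpa using (hypos 0).le
    | succ n ih =>
      have h := hdiff n
      have h1 : 0 < 1 / y n := by have := hypos n; positivity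
      push_cast
      nlinarith
  have hytop : Tendsto y atTop atTop :=
    tendsto_atTop_mono hlow tendsto_natCast_atTop_atTop
  have hinv : Tendsto (fun n => 1 / y n) atTop (nhds 0) := by
    simpa [one_div, Pi.inv_def] using hytop.inv_tendsto_atTop
  have hd2 : Tendsto (fun n => y (n + 1) - y n) atTop (nhds 2) := by
    simp only [hdiff]
    simpa using tendsto_const_nhds.add hinv
  have hces := hd2.cesaro
  have h1 : Tendsto (fun n : ℕ => (y n - y 0) / n) atTop (nhds 2) := by
    refine hces.congr fun n => ?_
    rw [Finset.sum_range_sub y n]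
    simp [smul_eq_mul, div_eq_inv_mul]
  have h2 : Tendsto (fun n : ℕ => y n / n) atTop (nhds 2) := by
    have h0 : Tendsto (fun n : ℕ => y 0 / n) atTop (nhds 0) :=
      tendsto_const_div_atTop_nhds_zero_nat (y 0)
    have := h1.add h0
    rw [add_zero] at this
    refine this.congr fun n => ?_
    rw [← add_div]
    ring_nf
  have h3 : Tendsto (fun n : ℕ => y n / (2 * n)) atTop (nhds 1) := by
    have := h2.div_const 2
    norm_num at this
    refine this.congr fun n => ?_
    rw [div_div]
    ring_nf
  have h4 : Tendsto (fun n : ℕ => Real.sqrt (y n / (2 * n))) atTop (nhds 1) := by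
    have := (Real.continuous_sqrt.tendsto 1).comp h3
    simpa only [Function.comp_def, Real.sqrt_one] using this
  refine h4.congr fun n => ?_
  rw [Real.sqrt_div (hypos n).le, hy]
  rw [Real.sqrt_sq (hpos n).le]
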